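/- Let 𝒢₁ = (G₁, S, μ₁, l₁) and 𝒢₂ = (G₂, S, μ₂, l₂) be comparable reconciled gene trees, let α ∈ [0,1], and let uv be a redundant edge of G₁. Then PLR(𝒢₁, 𝒢₂) ≥ PLR(𝒢₁/uv, 𝒢₂). -/

import Mathlib

open SimpleGraph

attribute [local instance] Classical.propDecidable

/-- A rooted tree: a finite connected acyclic graph with a distinguished root. -/
structure RTree (V : Type*) [Fintype V] where
  adj : SimpleGraph V
  isTree : adj.IsTree
  root : V

variable {V : Type*} [Fintype V]

/-- `Anc T a b` : `a` is an ancestor of `b` (i.e. `b ⪯ a`), expressed as: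
`a` lies on the (unique) path from the root to `b`. -/
def Anc (T : RTree V) (a b : V) : Prop :=
  T.adj.dist T.root b = T.adj.dist T.root a + T.adj.dist a b

/-- `IsChild T c p` : `c` is a child of `p`. -/
def IsChild (T : RTree V) (c p : V) : Prop :=
  T.adj.Adj c p ∧ Anc T p c

/-- The set of children of `v`. -/
def childSet (T : RTree V) (v : V) : Set V := {c | IsChild T c v}

/-- A leaf is a node with no children. -/
def IsLeaf (T : RTree V) (v : V) : Prop := ∀ c, ¬ IsChild T c v

/-- The clade of `v`: the set of leaves descending from `v`. -/
def clade (T : RTree V) (v : V) : Set V := {x | IsLeaf T x ∧ Anc T v x}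

/-- `w` is the lowest common ancestor of the set `X` in `T`. -/
def IsLCA (T : RTree V) (X : Set V) (w : V) : Prop :=
  (∀ x ∈ X, Anc T w x) ∧ ∀ w', (∀ x ∈ X, Anc T w' x) → Anc T w' w

/-- A species tree is a rooted binary tree: every internal node has exactly two children. -/
def IsSpeciesTree (S : RTree V) : Prop :=
  ∀ v, ¬ IsLeaf S v → (childSet S v).ncard = 2

/-- Number of leaves of a rooted tree. -/
noncomputable def numLeaves (T : RTree V) : ℕ := {v | IsLeaf T v}.ncard

/-- `Hsum S` = `H(S)`: the sum of root-to-internal-node distances in `S`. -/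
noncomputable def Hsum (S : RTree V) : ℕ :=
  ∑ v : V, if IsLeaf S v then 0 else S.adj.dist S.root v

inductive Evt | dup | spec | extant
deriving DecidableEq

/-- A reconciled gene tree with species tree `S`, whose leaves are labeled bijectively by
the set of genes `Γ`. -/
structure Recon (Γ : Type*) (VG : Type*) (VS : Type*) [Fintype VG] [Fintype VS]
    (S : RTree VS) where
  tree : RTree VG
  geneLeaf : Γ → VG
  geneLeaf_inj : Function.Injective geneLeaf
  geneLeaf_range : ∀ v, IsLeaf tree v ↔ ∃ g, geneLeaf g = v
  μ : VG → VS
  lbl : VG → Evt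
  internal_children : ∀ v, ¬ IsLeaf tree v → 2 ≤ (childSet tree v).ncard
  leaf_species : ∀ v, IsLeaf tree v → IsLeaf S (μ v)
  leaf_lbl : ∀ v, IsLeaf tree v → lbl v = Evt.extant
  internal_lbl : ∀ v, ¬ IsLeaf tree v → lbl v = Evt.dup ∨ lbl v = Evt.spec
  time_consistent : ∀ a b, Anc tree a b → Anc S (μ a) (μ b)
  spec_two_children : ∀ v, lbl v = Evt.spec →
    ¬ IsLeaf S (μ v) ∧ (childSet tree v).ncard = 2
  spec_separates : ∀ v, lbl v = Evt.spec →
    ∀ v₁ v₂, IsChild tree v₁ v → IsChild tree v₂ v → v₁ ≠ v₂ →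
      ∃ s₁ s₂, IsChild S s₁ (μ v) ∧ IsChild S s₂ (μ v) ∧ s₁ ≠ s₂ ∧
        ((Anc S s₁ (μ v₁) ∧ Anc S s₂ (μ v₂)) ∨ (Anc S s₂ (μ v₁) ∧ Anc S s₁ (μ v₂)))

variable {Γ : Type*} {VS VG₁ VG₂ : Type*} [Fintype VS] [Fintype VG₁] [Fintype VG₂]
  {S : RTree VS}

/-- The clade of a gene tree node, as a set of genes. -/
def gclade (𝒢 : Recon Γ VG₁ VS S) (v : VG₁) : Set Γ :=
  {g | Anc 𝒢.tree v (𝒢.geneLeaf g)}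

/-- Two reconciled gene trees (over the same species tree and gene set) are comparable if
corresponding extant genes map to the same species. -/
def Comparable (𝒢₁ : Recon Γ VG₁ VS S) (𝒢₂ : Recon Γ VG₂ VS S) : Prop :=
  ∀ g, 𝒢₁.μ (𝒢₁.geneLeaf g) = 𝒢₂.μ (𝒢₂.geneLeaf g)

/-- `m` is the correspondence map `v ↦ lca_{G₂}(L(G₁(v)))`. -/
def IsLcaMap (𝒢₁ : Recon Γ VG₁ VS S) (𝒢₂ : Recon Γ VG₂ VS S) (m : VG₁ → VG₂) : Prop :=
  ∀ v, IsLCA 𝒢₂.tree (𝒢₂.geneLeaf '' gclade 𝒢₁ v) (m v)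

/-- `μ` is the lca-mapping: every node maps to the lca of the species of its leaf descendants. -/
def UsesLcaMapping (𝒢 : Recon Γ VG₁ VS S) : Prop :=
  ∀ v, IsLCA S (𝒢.μ '' clade 𝒢.tree v) (𝒢.μ v)

/-- The path component `d_path(𝒢₁,𝒢₂)` (with `m` the lca correspondence map). -/
noncomputable def dPath (𝒢₁ : Recon Γ VG₁ VS S) (𝒢₂ : Recon Γ VG₂ VS S)
    (m : VG₁ → VG₂) : ℕ :=
  ∑ v : VG₁, S.adj.dist (𝒢₁.μ v) (𝒢₂.μ (m v))

/-- The label component `d_lbl(𝒢₁,𝒢₂)`. -/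
noncomputable def dLbl (𝒢₁ : Recon Γ VG₁ VS S) (𝒢₂ : Recon Γ VG₂ VS S)
    (m : VG₁ → VG₂) : ℕ :=
  {v : VG₁ | 𝒢₁.lbl v ≠ 𝒢₂.lbl (m v)}.ncard

/-- The asymmetric dissimilarity `d_asym = α·d_path + (1−α)·d_lbl`. -/
noncomputable def dAsym (α : ℝ) (𝒢₁ : Recon Γ VG₁ VS S) (𝒢₂ : Recon Γ VG₂ VS S)
    (m : VG₁ → VG₂) : ℝ :=
  α * (dPath 𝒢₁ 𝒢₂ m : ℝ) + (1 - α) * (dLbl 𝒢₁ 𝒢₂ m : ℝ)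

/-- The Path-Label Reconciliation dissimilarity `PLR(𝒢₁,𝒢₂)`, where `m₁₂`, `m₂₁` are the
lca correspondence maps in the two directions. -/
noncomputable def PLR (α : ℝ) (𝒢₁ : Recon Γ VG₁ VS S) (𝒢₂ : Recon Γ VG₂ VS S)
    (m₁₂ : VG₁ → VG₂) (m₂₁ : VG₂ → VG₁) : ℝ :=
  dAsym α 𝒢₁ 𝒢₂ m₁₂ + dAsym α 𝒢₂ 𝒢₁ m₂₁

/-- An edge `uv` (with `u` the parent of `v`) is redundant if both endpoints are duplications
mapped to the same species. -/
def RedundantEdge (𝒢 : Recon Γ VG₁ VS S) (u v : VG₁) : Prop :=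
  IsChild 𝒢.tree v u ∧ 𝒢.μ u = 𝒢.μ v ∧ 𝒢.lbl u = Evt.dup ∧ 𝒢.lbl v = Evt.dup

/-- A reconciled gene tree is least duplication-resolved if it has no redundant edge. -/
def LeastDupResolved (𝒢 : Recon Γ VG₁ VS S) : Prop :=
  ∀ u v, ¬ RedundantEdge 𝒢 u v

/-- `𝒢'` is obtained from `𝒢` by contracting the edge `uv` (`u` the parent of `v`), i.e.
deleting `v` and attaching its children to `u`; `φ` is the corresponding quotient map. -/
def IsContractionOf (𝒢 : Recon Γ VG₁ VS S) (u v : VG₁) (𝒢' : Recon Γ VG₂ VS S)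
    (φ : VG₁ → VG₂) : Prop :=
  Function.Surjective φ ∧
  φ u = φ v ∧
  (∀ a b, φ a = φ b → a = b ∨ (a = u ∧ b = v) ∨ (a = v ∧ b = u)) ∧
  (∀ x y, 𝒢'.tree.adj.Adj x y ↔
    ∃ a b, φ a = x ∧ φ b = y ∧ 𝒢.tree.adj.Adj a b ∧ ¬(a = u ∧ b = v) ∧ ¬(a = v ∧ b = u)) ∧
  𝒢'.tree.root = φ 𝒢.tree.root ∧
  (∀ g, 𝒢'.geneLeaf g = φ (𝒢.geneLeaf g)) ∧
  (∀ a, 𝒢'.μ (φ a) = 𝒢.μ a) ∧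
  (∀ a, 𝒢'.lbl (φ a) = 𝒢.lbl a)

/-- Symmetrized redundancy relation on nodes. -/
def RedundantAdj (𝒢 : Recon Γ VG₁ VS S) (a b : VG₁) : Prop :=
  RedundantEdge 𝒢 a b ∨ RedundantEdge 𝒢 b a

/-- `𝒢'` is the least duplication-resolved tree `LR(𝒢)` obtained by contracting every
redundant edge of `𝒢`; `φ` is the corresponding quotient map. -/
def IsLROf (𝒢 : Recon Γ VG₁ VS S) (𝒢' : Recon Γ VG₂ VS S) (φ : VG₁ → VG₂) : Prop :=
  Function.Surjective φ ∧
  (∀ a b, φ a = φ b ↔ Relation.EqvGen (RedundantAdj 𝒢) a b) ∧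
  (∀ x y, 𝒢'.tree.adj.Adj x y ↔
    ∃ a b, φ a = x ∧ φ b = y ∧ 𝒢.tree.adj.Adj a b ∧ ¬ RedundantAdj 𝒢 a b) ∧
  𝒢'.tree.root = φ 𝒢.tree.root ∧
  (∀ g, 𝒢'.geneLeaf g = φ (𝒢.geneLeaf g)) ∧
  (∀ a, 𝒢'.μ (φ a) = 𝒢.μ a) ∧
  (∀ a, 𝒢'.lbl (φ a) = 𝒢.lbl a)

/-- Isomorphism of reconciled gene trees: a leaf-fixing bijection preserving edges,
species maps and event labels. -/
def ReconIso (𝒢₁ : Recon Γ VG₁ VS S) (𝒢₂ : Recon Γ VG₂ VS S) : Prop :=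
  ∃ φ : VG₁ ≃ VG₂,
    (∀ g, φ (𝒢₁.geneLeaf g) = 𝒢₂.geneLeaf g) ∧
    (∀ a b, 𝒢₂.tree.adj.Adj (φ a) (φ b) ↔ 𝒢₁.tree.adj.Adj a b) ∧
    (∀ v, 𝒢₂.μ (φ v) = 𝒢₁.μ v) ∧
    (∀ v, 𝒢₂.lbl (φ v) = 𝒢₁.lbl v)

/-- Exactly one gene per species: the gene set is the set of species leaves, and each gene
resides in its own species. -/
def OneGenePerSpecies (𝒢 : Recon {s : VS // IsLeaf S s} VG₁ VS S) : Prop :=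
  ∀ g, 𝒢.μ (𝒢.geneLeaf g) = g.1

namespace AuxTree

variable {V : Type*} [Fintype V]

lemma conn (T : RTree V) : T.adj.Connected := T.isTree.isConnected

lemma anc_refl (T : RTree V) (a : V) : Anc T a a := by
  simp [Anc]

lemma anc_antisymm {T : RTree V} {a b : V} (h1 : Anc T a b) (h2 : Anc T b a) : a = b := by
  unfold Anc at h1 h2
  have hc : T.adj.dist b a = T.adj.dist a b := SimpleGraph.dist_comm
  have h3 : T.adj.dist a b = 0 := by omega
  exact ((conn T).dist_eq_zero_iff).1 h3

lemma anc_trans {T : RTree V} {a b c : V} (h1 : Anc T a b) (h2 : Anc T b c) : Anc T a c := by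
  unfold Anc at *
  have t1 : T.adj.dist a c ≤ T.adj.dist a b + T.adj.dist b c := (conn T).dist_triangle
  have t2 : T.adj.dist T.root c ≤ T.adj.dist T.root a + T.adj.dist a c := (conn T).dist_triangle
  omega

lemma path_length_eq_dist (T : RTree V) {a b : V} (p : T.adj.Walk a b) (hp : p.IsPath) :
    p.length = T.adj.dist a b := by
  obtain ⟨q, hq, hql⟩ := (conn T).exists_path_of_dist a b
  obtain ⟨r, -, hru⟩ := T.isTree.existsUnique_path a b
  rw [hru p hp, ← hru q hq, hql]

lemma anc_iff_mem {T : RTree V} {a b : V} (p : T.adj.Walk T.root b) (hp : p.IsPath) :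
    Anc T a b ↔ a ∈ p.support := by
  constructor
  · intro h
    obtain ⟨q1, hq1, hl1⟩ := (conn T).exists_path_of_dist T.root a
    obtain ⟨q2, hq2, hl2⟩ := (conn T).exists_path_of_dist a b
    have hint : ∀ c, c ∈ q1.support → c ∈ q2.support → c = a := by
      intro c hc1 hc2
      have e1 : (q1.takeUntil c hc1).length = T.adj.dist T.root c :=
        path_length_eq_dist T _ (hq1.takeUntil hc1)
      have e1' : (q1.dropUntil c hc1).length = T.adj.dist c a :=
        path_length_eq_dist T _ (hq1.dropUntil hc1)
      have e2 : (q2.takeUntil c hc2).length = T.adj.dist a c :=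
        path_length_eq_dist T _ (hq2.takeUntil hc2)
      have e2' : (q2.dropUntil c hc2).length = T.adj.dist c b :=
        path_length_eq_dist T _ (hq2.dropUntil hc2)
      have s1 : (q1.takeUntil c hc1).length + (q1.dropUntil c hc1).length = q1.length := by
        have := congrArg SimpleGraph.Walk.length (q1.take_spec hc1)
        rwa [SimpleGraph.Walk.length_append] at this
      have s2 : (q2.takeUntil c hc2).length + (q2.dropUntil c hc2).length = q2.length := by
        have := congrArg SimpleGraph.Walk.length (q2.take_spec hc2)
        rwa [SimpleGraph.Walk.length_append] at this
      have tb : T.adj.dist T.root b ≤ T.adj.dist T.root c + T.adj.dist c b :=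
        (conn T).dist_triangle
      have hca : T.adj.dist c a = T.adj.dist a c := SimpleGraph.dist_comm
      have hz : T.adj.dist a c = 0 := by unfold Anc at h; omega
      exact (((conn T).dist_eq_zero_iff).1 hz).symm
    have hdisj : ∀ x, x ∈ q1.support → x ∈ q2.support.tail → False := by
      intro x hx1 hx2
      have hx2' : x ∈ q2.support := List.mem_of_mem_tail hx2
      have hxa := hint x hx1 hx2'
      subst hxa
      have hnd := (SimpleGraph.Walk.isPath_def _).1 hq2
      rw [SimpleGraph.Walk.support_eq_cons] at hnd
      exact (List.nodup_cons.1 hnd).1 hx2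
    have happ : (q1.append q2).IsPath := by
      rw [SimpleGraph.Walk.isPath_def, SimpleGraph.Walk.support_append, List.nodup_append]
      exact ⟨(SimpleGraph.Walk.isPath_def _).1 hq1,
        ((SimpleGraph.Walk.isPath_def _).1 hq2).sublist (List.tail_sublist _),
        fun x hx1 y hy hxy => by subst hxy; exact hdisj x hx1 hy⟩
    obtain ⟨r0, -, hru⟩ := T.isTree.existsUnique_path T.root b
    have : q1.append q2 = p := (hru _ happ).trans (hru p hp).symm
    rw [← this, SimpleGraph.Walk.mem_support_append_iff]
    exact Or.inl (SimpleGraph.Walk.end_mem_support q1)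
  · intro h
    have e1 : (p.takeUntil a h).length = T.adj.dist T.root a :=
      path_length_eq_dist T _ (hp.takeUntil h)
    have e2 : (p.dropUntil a h).length = T.adj.dist a b :=
      path_length_eq_dist T _ (hp.dropUntil h)
    have s : (p.takeUntil a h).length + (p.dropUntil a h).length = p.length := by
      have := congrArg SimpleGraph.Walk.length (p.take_spec h)
      rwa [SimpleGraph.Walk.length_append] at this
    have hl : p.length = T.adj.dist T.root b := path_length_eq_dist T p hp
    unfold Anc
    omega

lemma push_path {V₂ : Type*} (T : RTree V) (G₂ : SimpleGraph V₂) (φ : V → V₂)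
    {u v : V} (huv : T.adj.Adj u v) (hce : φ u = φ v)
    (hfib : ∀ a b, φ a = φ b → a = b ∨ (a = u ∧ b = v) ∨ (a = v ∧ b = u))
    (hadj : ∀ a b, T.adj.Adj a b → ¬(a = u ∧ b = v) → ¬(a = v ∧ b = u) → G₂.Adj (φ a) (φ b)) :
    ∀ {a b : V} (p : T.adj.Walk a b), p.IsPath →
      ∃ q : G₂.Walk (φ a) (φ b), q.IsPath ∧ ∀ x, x ∈ q.support ↔ ∃ c ∈ p.support, φ c = x := by
  intro a b p
  induction p with
  | nil => intro _; exact ⟨.nil, by simp, by simp [eq_comm]⟩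
  | @cons a w b h q ih =>
    intro hp
    have hq : q.IsPath := ((SimpleGraph.Walk.cons_isPath_iff _ _).1 hp).1
    have hna : a ∉ q.support := ((SimpleGraph.Walk.cons_isPath_iff _ _).1 hp).2
    obtain ⟨q', hq', hsup⟩ := ih hq
    have key : ∀ c (hc : c ∈ q.support), T.adj.Adj a c → w = c := by
      intro c hc hac
      have hp1 : (SimpleGraph.Walk.cons h (q.takeUntil c hc)).IsPath := by
        rw [SimpleGraph.Walk.cons_isPath_iff]
        exact ⟨hq.takeUntil hc, fun hmem => hna (q.support_takeUntil_subset hc hmem)⟩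
      have hp2 : (SimpleGraph.Walk.cons hac SimpleGraph.Walk.nil).IsPath := by
        simp [SimpleGraph.Walk.cons_isPath_iff, hac.ne]
      obtain ⟨r0, -, hru⟩ := T.isTree.existsUnique_path a c
      have heq := (hru _ hp1).trans (hru _ hp2).symm
      have hlen := congrArg SimpleGraph.Walk.length heq
      simp only [SimpleGraph.Walk.length_cons, SimpleGraph.Walk.length_nil] at hlen
      exact SimpleGraph.Walk.eq_of_length_eq_zero (by omega : (q.takeUntil c hc).length = 0)
    by_cases he : φ a = φ w
    · refine ⟨q'.copy he.symm rfl, ?_, ?_⟩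
      · rwa [SimpleGraph.Walk.isPath_copy]
      · intro x
        rw [SimpleGraph.Walk.support_copy, hsup]
        simp only [SimpleGraph.Walk.support_cons, List.mem_cons]
        constructor
        · rintro ⟨c, hc, rfl⟩; exact ⟨c, Or.inr hc, rfl⟩
        · rintro ⟨c, hc | hc, rfl⟩
          · subst hc; exact ⟨w, q.start_mem_support, he.symm⟩
          · exact ⟨c, hc, rfl⟩
    · have hn1 : ¬(a = u ∧ w = v) := fun hh => he (hh.1 ▸ hh.2 ▸ hce)
      have hn2 : ¬(a = v ∧ w = u) := fun hh => he (hh.1 ▸ hh.2 ▸ hce.symm)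
      refine ⟨SimpleGraph.Walk.cons (hadj a w h hn1 hn2) q', ?_, ?_⟩
      · rw [SimpleGraph.Walk.cons_isPath_iff]
        refine ⟨hq', fun hmem => ?_⟩
        obtain ⟨c, hc, hcc⟩ := (hsup (φ a)).1 hmem
        rcases hfib c a hcc with hca | ⟨hcu, hav⟩ | ⟨hcv, hau⟩
        · exact hna (hca ▸ hc)
        · have hw : w = c := key c hc (by rw [hcu, hav]; exact huv.symm)
          exact he (by rw [hav, hw, hcu]; exact hce.symm)
        · have hw : w = c := key c hc (by rw [hcv, hau]; exact huv)
          exact he (by rw [hau, hw, hcv]; exact hce)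
      · intro x
        simp only [SimpleGraph.Walk.support_cons, List.mem_cons, hsup]
        constructor
        · rintro (rfl | ⟨c, hc, rfl⟩)
          · exact ⟨a, Or.inl rfl, rfl⟩
          · exact ⟨c, Or.inr hc, rfl⟩
        · rintro ⟨c, rfl | hc, rfl⟩
          · exact Or.inl rfl
          · exact Or.inr ⟨c, hc, rfl⟩

lemma ancC {V₂ : Type*} [Fintype V₂] (T : RTree V) (T' : RTree V₂) (φ : V → V₂)
    {u v : V} (huv : T.adj.Adj u v) (hce : φ u = φ v)
    (hfib : ∀ a b, φ a = φ b → a = b ∨ (a = u ∧ b = v) ∨ (a = v ∧ b = u))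
    (hadj : ∀ a b, T.adj.Adj a b → ¬(a = u ∧ b = v) → ¬(a = v ∧ b = u) →
      T'.adj.Adj (φ a) (φ b))
    (hroot : T'.root = φ T.root) (a b : V) :
    Anc T' (φ a) (φ b) ↔ ∃ a', φ a' = φ a ∧ Anc T a' b := by
  obtain ⟨p, hp, -⟩ := (conn T).exists_path_of_dist T.root b
  obtain ⟨q, hq, hsup⟩ := push_path T T'.adj φ huv hce hfib hadj p hp
  have hq2 : (q.copy hroot.symm rfl).IsPath := by rwa [SimpleGraph.Walk.isPath_copy]
  rw [anc_iff_mem (q.copy hroot.symm rfl) hq2, SimpleGraph.Walk.support_copy, hsup]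
  constructor
  · rintro ⟨c, hc, hcc⟩; exact ⟨c, hcc, (anc_iff_mem p hp).2 hc⟩
  · rintro ⟨c, hcc, hanc⟩; exact ⟨c, (anc_iff_mem p hp).1 hanc, hcc⟩

end AuxTree

/-- Contracting a redundant edge cannot increase the PLR dissimilarity. -/
theorem stmt1 {VG₁' : Type*} [Fintype VG₁']
    (hS : IsSpeciesTree S)
    (𝒢₁ : Recon Γ VG₁ VS S) (𝒢₂ : Recon Γ VG₂ VS S) (𝒢₁' : Recon Γ VG₁' VS S)
    (α : ℝ) (hα₀ : 0 ≤ α) (hα₁ : α ≤ 1)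
    (hcomp : Comparable 𝒢₁ 𝒢₂)
    (u v : VG₁) (hred : RedundantEdge 𝒢₁ u v)
    (φ : VG₁ → VG₁') (hφ : IsContractionOf 𝒢₁ u v 𝒢₁' φ)
    (m₁₂ : VG₁ → VG₂) (m₂₁ : VG₂ → VG₁) (m₁₂' : VG₁' → VG₂) (m₂₁' : VG₂ → VG₁')
    (hm₁₂ : IsLcaMap 𝒢₁ 𝒢₂ m₁₂) (hm₂₁ : IsLcaMap 𝒢₂ 𝒢₁ m₂₁)
    (hm₁₂' : IsLcaMap 𝒢₁' 𝒢₂ m₁₂') (hm₂₁' : IsLcaMap 𝒢₂ 𝒢₁' m₂₁') :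
    PLR α 𝒢₁' 𝒢₂ m₁₂' m₂₁' ≤ PLR α 𝒢₁ 𝒢₂ m₁₂ m₂₁ := by
  obtain ⟨hsurj, hce, hfib, hadjiff, hroot, hleaf, hμ, hlbl⟩ := hφ
  obtain ⟨⟨hadjvu, hancuv⟩, hμuv, hlblu, hlblv⟩ := hred
  have huv : 𝒢₁.tree.adj.Adj u v := hadjvu.symm
  have hune : u ≠ v := huv.ne
  have hadj : ∀ a b, 𝒢₁.tree.adj.Adj a b → ¬(a = u ∧ b = v) → ¬(a = v ∧ b = u) →
      𝒢₁'.tree.adj.Adj (φ a) (φ b) :=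
    fun a b hab h1 h2 => (hadjiff (φ a) (φ b)).2 ⟨a, b, rfl, rfl, hab, h1, h2⟩
  have hC : ∀ a b, Anc 𝒢₁'.tree (φ a) (φ b) ↔ ∃ a', φ a' = φ a ∧ Anc 𝒢₁.tree a' b :=
    AuxTree.ancC _ _ φ huv hce hfib hadj hroot
  have hvu : ∀ x, Anc 𝒢₁.tree v x → Anc 𝒢₁.tree u x :=
    fun x hx => AuxTree.anc_trans hancuv hx
  -- gclade transfer
  have hgc : ∀ a, a ≠ v → gclade 𝒢₁' (φ a) = gclade 𝒢₁ a := by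
    intro a hav
    ext g
    simp only [gclade, Set.mem_setOf_eq, hleaf]
    rw [hC]
    constructor
    · rintro ⟨a', ha', hanc⟩
      rcases hfib a' a ha' with h1 | ⟨h1, h2⟩ | ⟨h1, h2⟩
      · rwa [h1] at hanc
      · exact absurd h2 hav
      · rw [h1] at hanc; rw [h2]; exact hvu _ hanc
    · intro h; exact ⟨a, rfl, h⟩
  have luniq₂ : ∀ (X : Set VG₂) w w', IsLCA 𝒢₂.tree X w → IsLCA 𝒢₂.tree X w' → w = w' :=
    fun _ w w' h h' => AuxTree.anc_antisymm (h'.2 w h.1) (h.2 w' h'.1)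
  have luniq' : ∀ (X : Set VG₁') w w', IsLCA 𝒢₁'.tree X w → IsLCA 𝒢₁'.tree X w' → w = w' :=
    fun _ w w' h h' => AuxTree.anc_antisymm (h'.2 w h.1) (h.2 w' h'.1)
  have hm12 : ∀ a, a ≠ v → m₁₂' (φ a) = m₁₂ a := by
    intro a hav
    have h1 := hm₁₂' (φ a)
    rw [hgc a hav] at h1
    exact luniq₂ _ _ _ h1 (hm₁₂ a)
  have hm21 : ∀ w, m₂₁' w = φ (m₂₁ w) := by
    intro w
    refine luniq' _ _ _ (hm₂₁' w) ?_
    constructor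
    · rintro y ⟨g, hg, rfl⟩
      rw [hleaf g]
      exact (hC (m₂₁ w) (𝒢₁.geneLeaf g)).2
        ⟨m₂₁ w, rfl, (hm₂₁ w).1 (𝒢₁.geneLeaf g) ⟨g, hg, rfl⟩⟩
    · intro w' hw'
      obtain ⟨c, rfl⟩ := hsurj w'
      by_cases hcv : c = v
      · have hall : ∀ g ∈ gclade 𝒢₂ w, Anc 𝒢₁.tree u (𝒢₁.geneLeaf g) := by
          intro g hg
          have hthis := hw' (𝒢₁'.geneLeaf g) ⟨g, hg, rfl⟩
          rw [hleaf g] at hthis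
          obtain ⟨c', hc', hanc⟩ := (hC c (𝒢₁.geneLeaf g)).1 hthis
          rcases hfib c' c hc' with h1 | ⟨h1, h2⟩ | ⟨h1, h2⟩
          · rw [h1, hcv] at hanc; exact hvu _ hanc
          · rw [h1] at hanc; exact hanc
          · rw [h1] at hanc; exact hvu _ hanc
        have hmin := (hm₂₁ w).2 u (by rintro x ⟨g, hg, rfl⟩; exact hall g hg)
        have h2 := (hC u (m₂₁ w)).2 ⟨u, rfl, hmin⟩
        rwa [show φ u = φ c by rw [hcv]; exact hce] at h2
      · have hall : ∀ g ∈ gclade 𝒢₂ w, Anc 𝒢₁.tree c (𝒢₁.geneLeaf g) := by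
          intro g hg
          have hthis := hw' (𝒢₁'.geneLeaf g) ⟨g, hg, rfl⟩
          rw [hleaf g] at hthis
          obtain ⟨c', hc', hanc⟩ := (hC c (𝒢₁.geneLeaf g)).1 hthis
          rcases hfib c' c hc' with h1 | ⟨h1, h2⟩ | ⟨h1, h2⟩
          · rwa [h1] at hanc
          · exact absurd h2 hcv
          · rw [h1] at hanc; rw [h2]; exact hvu _ hanc
        have hmin := (hm₂₁ w).2 c (by rintro x ⟨g, hg, rfl⟩; exact hall g hg)
        exact (hC c (m₂₁ w)).2 ⟨c, rfl, hmin⟩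
  -- section ψ of φ avoiding v
  have hψex : ∀ x : VG₁', ∃ a, a ≠ v ∧ φ a = x := by
    intro x; obtain ⟨a, rfl⟩ := hsurj x
    by_cases h : a = v
    · exact ⟨u, hune, by rw [h, hce]⟩
    · exact ⟨a, h, rfl⟩
  choose ψ hψv hψφ using hψex
  have hψinj : Function.Injective ψ := fun x y hxy => by rw [← hψφ x, ← hψφ y, hxy]
  have hμ' : ∀ x, 𝒢₁'.μ x = 𝒢₁.μ (ψ x) := by
    intro x
    conv_lhs => rw [← hψφ x]
    exact hμ (ψ x)
  have hlbl' : ∀ x, 𝒢₁'.lbl x = 𝒢₁.lbl (ψ x) := by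
    intro x
    conv_lhs => rw [← hψφ x]
    exact hlbl (ψ x)
  have hm' : ∀ x, m₁₂' x = m₁₂ (ψ x) := by
    intro x
    conv_lhs => rw [← hψφ x]
    exact hm12 (ψ x) (hψv x)
  have hdP1 : dPath 𝒢₁' 𝒢₂ m₁₂' ≤ dPath 𝒢₁ 𝒢₂ m₁₂ := by
    unfold dPath
    rw [Finset.sum_congr rfl (fun x _ => by rw [hμ' x, hm' x])]
    have him : ∑ a ∈ Finset.univ.image ψ, S.adj.dist (𝒢₁.μ a) (𝒢₂.μ (m₁₂ a))
        = ∑ x : VG₁', S.adj.dist (𝒢₁.μ (ψ x)) (𝒢₂.μ (m₁₂ (ψ x))) :=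
      Finset.sum_image (fun x _ y _ h => hψinj h)
    rw [← him]
    exact Finset.sum_le_sum_of_subset (Finset.subset_univ _)
  have hdL1 : dLbl 𝒢₁' 𝒢₂ m₁₂' ≤ dLbl 𝒢₁ 𝒢₂ m₁₂ := by
    unfold dLbl
    have hsub : ψ '' {x | 𝒢₁'.lbl x ≠ 𝒢₂.lbl (m₁₂' x)} ⊆
        {a | 𝒢₁.lbl a ≠ 𝒢₂.lbl (m₁₂ a)} := by
      rintro _ ⟨x, hx, rfl⟩
      simp only [Set.mem_setOf_eq] at hx ⊢
      rwa [← hlbl' x, ← hm' x]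
    calc {x | 𝒢₁'.lbl x ≠ 𝒢₂.lbl (m₁₂' x)}.ncard
        = (ψ '' {x | 𝒢₁'.lbl x ≠ 𝒢₂.lbl (m₁₂' x)}).ncard :=
          (Set.ncard_image_of_injective _ hψinj).symm
      _ ≤ {a | 𝒢₁.lbl a ≠ 𝒢₂.lbl (m₁₂ a)}.ncard :=
          Set.ncard_le_ncard hsub (Set.toFinite _)
  have hdP2 : dPath 𝒢₂ 𝒢₁' m₂₁' = dPath 𝒢₂ 𝒢₁ m₂₁ := by
    unfold dPath
    exact Finset.sum_congr rfl fun w _ => by rw [hm21 w, hμ (m₂₁ w)]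
  have hdL2 : dLbl 𝒢₂ 𝒢₁' m₂₁' = dLbl 𝒢₂ 𝒢₁ m₂₁ := by
    unfold dLbl
    congr 1
    ext w
    simp only [Set.mem_setOf_eq]
    rw [hm21 w, hlbl (m₂₁ w)]
  have h1 : (dPath 𝒢₁' 𝒢₂ m₁₂' : ℝ) ≤ dPath 𝒢₁ 𝒢₂ m₁₂ := Nat.cast_le.2 hdP1
  have h2 : (dLbl 𝒢₁' 𝒢₂ m₁₂' : ℝ) ≤ dLbl 𝒢₁ 𝒢₂ m₁₂ := Nat.cast_le.2 hdL1
  have hα' : (0:ℝ) ≤ 1 - α := by linarith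
  unfold PLR dAsym
  rw [hdP2, hdL2]
  nlinarith [mul_le_mul_of_nonneg_left h1 hα₀, mul_le_mul_of_nonneg_left h2 hα']
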